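/- arXiv:2509.03076 — 2 statements merged into one kernel-verified Lean document; each statement's English description precedes it below -/
import Mathlib

section
/- Let F be a holomorphic self-map of the upper half-plane H⁺, parabolic with Wolff point at ∞, and let w_0 ∈ H⁺. Then F^n(w)/F^n(w_0) → 1 as n → ∞, uniformly on compact subsets of H⁺. -/
open Complex Metric Filter Set

/-- The upper half-plane as a subset of ℂ. -/
def UHP : Set ℂ := {w : ℂ | 0 < w.im}

/-- Inverse hyperbolic tangent. -/
noncomputable def artanh (t : ℝ) : ℝ := (1/2) * Real.log ((1 + t) / (1 - t))

/-- Poincaré distance on the upper half-plane. -/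
noncomputable def pdH (w₁ w₂ : ℂ) : ℝ :=
  artanh (‖(w₂ - w₁) / (w₂ - (starRingEnd ℂ) w₁)‖)

/-- Holomorphic self-map of the upper half-plane. -/
def HolSelfUHP (F : ℂ → ℂ) : Prop :=
  DifferentiableOn ℂ F UHP ∧ MapsTo F UHP UHP

/-- A sequence in the upper half-plane converges non-tangentially to ∞. -/
def NonTangToInf (w : ℕ → ℂ) : Prop :=
  Tendsto (fun n => ‖w n‖) atTop atTop ∧
  ∃ ε > 0, ∀ n, ε * ‖w n‖ ≤ (w n).im

/-- `F` is a parabolic holomorphic self-map of the upper half-plane with Wolff point ∞: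
fixed-point-free, iterates tend to ∞ locally uniformly, and `F w / w → 1` along
sequences converging non-tangentially to ∞. -/
def ParabolicAtInf (F : ℂ → ℂ) : Prop :=
  HolSelfUHP F ∧ (∀ w ∈ UHP, F w ≠ w) ∧
  (∀ K ⊆ UHP, IsCompact K → ∀ M : ℝ,
    ∀ᶠ n in atTop, ∀ w ∈ K, M ≤ ‖F^[n] w‖) ∧
  (∀ w : ℕ → ℂ, (∀ n, w n ∈ UHP) → NonTangToInf w →
    Tendsto (fun n => F (w n) / w n) atTop (nhds 1))

namespace Stmt13Aux

local notation "conj'" => (starRingEnd ℂ)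

namespace Complex

noncomputable def abs : AbsoluteValue ℂ ℝ := IsAbsoluteValue.toAbsoluteValue (norm : ℂ → ℝ)

lemma abs_def' (z : ℂ) : Complex.abs z = ‖z‖ := rfl

lemma norm_eq_abs (z : ℂ) : ‖z‖ = Complex.abs z := rfl

lemma abs_apply (z : ℂ) : Complex.abs z = Real.sqrt (_root_.Complex.normSq z) :=
  _root_.Complex.norm_def z

lemma sq_abs (z : ℂ) : Complex.abs z ^ 2 = _root_.Complex.normSq z := _root_.Complex.sq_norm z

lemma abs_conj (z : ℂ) : Complex.abs (conj' z) = Complex.abs z := by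
  simp [abs_def']

lemma abs_ofReal (r : ℝ) : Complex.abs (r : ℂ) = |r| := by
  simp [abs_def']

lemma abs_I : Complex.abs _root_.Complex.I = 1 := by
  simp [abs_def']

lemma continuous_abs : Continuous Complex.abs := continuous_norm

lemma im_le_abs (z : ℂ) : z.im ≤ Complex.abs z := _root_.Complex.im_le_norm z

lemma abs_le_abs_of_mapsTo_ball_self {f : ℂ → ℂ} {R : ℝ} {z : ℂ}
    (hd : DifferentiableOn ℂ f (ball 0 R)) (h_maps : MapsTo f (ball 0 R) (ball 0 R))
    (h₀ : f 0 = 0) (hz : Complex.abs z < R) : Complex.abs (f z) ≤ Complex.abs z :=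
  _root_.Complex.norm_le_norm_of_mapsTo_ball hd (h_maps.mono_right ball_subset_closedBall) h₀ hz

lemma norm_dslope_le_div_of_mapsTo_ball {f : ℂ → ℂ} {c z : ℂ} {R₁ R₂ : ℝ}
    (hd : DifferentiableOn ℂ f (ball c R₁))
    (h_maps : MapsTo f (ball c R₁) (ball (f c) R₂)) (hz : z ∈ ball c R₁) :
    ‖dslope f c z‖ ≤ R₂ / R₁ :=
  _root_.Complex.norm_dslope_le_div_of_mapsTo_ball hd
    (h_maps.mono_right ball_subset_closedBall) hz

end Complex

lemma mem_UHP {z : ℂ} : z ∈ UHP ↔ 0 < z.im := Iff.rfl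

lemma sub_conj_ne {a b : ℂ} (ha : a ∈ UHP) (hb : b ∈ UHP) : a - conj' b ≠ 0 := by
  intro h
  have him : (a - conj' b).im = a.im + b.im := by simp [Complex.sub_im, Complex.conj_im]
  rw [h] at him
  simp only [Complex.zero_im] at him
  have := mem_UHP.1 ha; have := mem_UHP.1 hb
  linarith

lemma self_sub_conj_ne {b : ℂ} (hb : b ∈ UHP) : b - conj' b ≠ 0 := sub_conj_ne hb hb

/-- Möbius map from UHP (based at b) to the unit disk. -/
noncomputable def Bmap (b u : ℂ) : ℂ := (u - b) / (u - conj' b)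

/-- Inverse of `Bmap b`. -/
noncomputable def Binv (b v : ℂ) : ℂ := (b - conj' b * v) / (1 - v)

/-- Pseudo-hyperbolic distance-like quantity on UHP. -/
noncomputable def pdd (u b : ℂ) : ℝ := Complex.abs (Bmap b u)

lemma pdd_nonneg (u b : ℂ) : 0 ≤ pdd u b := Complex.abs.nonneg _

lemma normSq_ineq {a b : ℂ} (ha : a ∈ UHP) (hb : b ∈ UHP) :
    Complex.normSq (a - b) < Complex.normSq (a - conj' b) := by
  have h1 := mem_UHP.1 ha
  have h2 := mem_UHP.1 hb
  simp only [Complex.normSq_apply, Complex.sub_re, Complex.sub_im, Complex.conj_re,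
    Complex.conj_im]
  nlinarith [sq_nonneg (a.re - b.re)]

lemma abs_sub_lt {a b : ℂ} (ha : a ∈ UHP) (hb : b ∈ UHP) :
    Complex.abs (a - b) < Complex.abs (a - conj' b) := by
  have := normSq_ineq ha hb
  rw [Complex.abs_apply, Complex.abs_apply]
  exact Real.sqrt_lt_sqrt (Complex.normSq_nonneg _) this

lemma pdd_lt_one {a b : ℂ} (ha : a ∈ UHP) (hb : b ∈ UHP) : pdd a b < 1 := by
  rw [pdd, Bmap, map_div₀]
  have hd : 0 < Complex.abs (a - conj' b) := by
    have := sub_conj_ne ha hb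
    exact Complex.abs.pos this
  rw [div_lt_one hd]
  exact abs_sub_lt ha hb

lemma Bmap_mem_ball {a b : ℂ} (ha : a ∈ UHP) (hb : b ∈ UHP) :
    Bmap b a ∈ ball (0 : ℂ) 1 := by
  rw [mem_ball_zero_iff]
  exact pdd_lt_one ha hb

lemma Bmap_self (b : ℂ) : Bmap b b = 0 := by simp [Bmap]

lemma Binv_zero (b : ℂ) : Binv b 0 = b := by simp [Binv]

lemma Bmap_diffOn {b : ℂ} (hb : b ∈ UHP) : DifferentiableOn ℂ (Bmap b) UHP := by
  apply DifferentiableOn.div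
  · exact (differentiable_id.sub_const b).differentiableOn
  · exact (differentiable_id.sub_const (conj' b)).differentiableOn
  · exact fun u hu => sub_conj_ne hu hb

lemma one_sub_ne_of_ball {v : ℂ} (hv : v ∈ ball (0 : ℂ) 1) : (1 : ℂ) - v ≠ 0 := by
  rw [mem_ball_zero_iff] at hv
  intro h
  have : v = 1 := by linear_combination -h
  rw [this] at hv
  simp at hv

lemma Binv_diffOn (b : ℂ) : DifferentiableOn ℂ (Binv b) (ball (0:ℂ) 1) := by
  apply DifferentiableOn.div
  · exact (differentiable_const b |>.sub ((differentiable_const (conj' b)).mul differentiable_id)).differentiableOn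
  · exact (differentiable_const (1:ℂ) |>.sub differentiable_id).differentiableOn
  · exact fun v hv => one_sub_ne_of_ball hv

lemma Binv_mem {b v : ℂ} (hb : b ∈ UHP) (hv : v ∈ ball (0 : ℂ) 1) : Binv b v ∈ UHP := by
  have hv' := mem_ball_zero_iff.1 hv
  rw [Complex.norm_eq_abs] at hv'
  have hns : Complex.normSq v < 1 := by
    have h := Complex.sq_abs v
    nlinarith [Complex.abs.nonneg v]
  have hden : (1 : ℂ) - v ≠ 0 := one_sub_ne_of_ball hv
  have hdenpos : 0 < Complex.normSq (1 - v) := Complex.normSq_pos.2 hden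
  have him : (Binv b v).im
      = b.im * (1 - Complex.normSq v) / Complex.normSq (1 - v) := by
    rw [Binv, Complex.div_im]
    simp only [Complex.normSq_apply, Complex.sub_im, Complex.sub_re, Complex.mul_im,
      Complex.mul_re, Complex.conj_re, Complex.conj_im, Complex.one_re, Complex.one_im]
    ring
  rw [mem_UHP, him]
  have hbim := mem_UHP.1 hb
  exact div_pos (mul_pos hbim (by linarith)) hdenpos
lemma one_sub_Bmap {b u : ℂ} (hu : u ∈ UHP) (hb : b ∈ UHP) :
    (1 : ℂ) - Bmap b u = (b - conj' b) / (u - conj' b) := by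
  rw [Bmap]
  field_simp [sub_conj_ne hu hb]
  ring

lemma Binv_Bmap {b u : ℂ} (hb : b ∈ UHP) (hu : u ∈ UHP) : Binv b (Bmap b u) = u := by
  have hden := sub_conj_ne hu hb
  have hbb := self_sub_conj_ne hb
  have h2 : (1 : ℂ) - Bmap b u ≠ 0 := by
    rw [one_sub_Bmap hu hb]
    exact div_ne_zero hbb hden
  rw [Binv]
  rw [div_eq_iff h2, Bmap]
  field_simp
  ring

lemma Bmap_Binv {b v : ℂ} (hb : b ∈ UHP) (hv : v ∈ ball (0:ℂ) 1) : Bmap b (Binv b v) = v := by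
  have h1 : (1:ℂ) - v ≠ 0 := one_sub_ne_of_ball hv
  have hbb := self_sub_conj_ne hb
  have hs1 : Binv b v - b = (b - conj' b) * v / (1 - v) := by
    rw [Binv]; field_simp; ring
  have hs2 : Binv b v - conj' b = (b - conj' b) / (1 - v) := by
    rw [Binv]; field_simp; ring
  rw [Bmap, hs1, hs2]
  field_simp


lemma Bmap_mapsTo {b : ℂ} (hb : b ∈ UHP) : MapsTo (Bmap b) UHP (ball (0:ℂ) 1) :=
  fun u hu => Bmap_mem_ball hu hb

lemma Binv_mapsTo {b : ℂ} (hb : b ∈ UHP) : MapsTo (Binv b) (ball (0:ℂ) 1) UHP :=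
  fun v hv => Binv_mem hb hv

/-- Schwarz–Pick: holomorphic self-maps of UHP do not increase `pdd`. -/
lemma pdd_contract {f : ℂ → ℂ} (hf : DifferentiableOn ℂ f UHP) (hm : MapsTo f UHP UHP)
    {a b : ℂ} (ha : a ∈ UHP) (hb : b ∈ UHP) : pdd (f a) (f b) ≤ pdd a b := by
  set G : ℂ → ℂ := (Bmap (f b)) ∘ f ∘ (Binv b) with hG
  have hfb : f b ∈ UHP := hm hb
  have hdG : DifferentiableOn ℂ G (ball (0:ℂ) 1) := by
    apply ((Bmap_diffOn hfb).comp (hf.comp (Binv_diffOn b) (Binv_mapsTo hb))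
      (fun v hv => hm (Binv_mem hb hv)))
  have hmG : MapsTo G (ball (0:ℂ) 1) (ball (0:ℂ) 1) :=
    fun v hv => Bmap_mem_ball (hm (Binv_mem hb hv)) hfb
  have hG0 : G 0 = 0 := by
    simp only [hG, Function.comp_apply, Binv_zero, Bmap_self]
  have hz : Complex.abs (Bmap b a) < 1 := pdd_lt_one ha hb
  have := Complex.abs_le_abs_of_mapsTo_ball_self hdG hmG hG0 hz
  have hGa : G (Bmap b a) = Bmap (f b) (f a) := by
    simp only [hG, Function.comp_apply, Binv_Bmap hb ha]
  rw [hGa] at this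
  exact this
/-- Disk Möbius transformation. -/
noncomputable def Mm (c v : ℂ) : ℂ := (v - c) / (1 - conj' c * v)

lemma one_sub_mul_ne {x : ℂ} (h : Complex.abs x < 1) : (1 : ℂ) - x ≠ 0 := by
  intro he
  have : x = 1 := by linear_combination -he
  rw [this] at h; simp at h

lemma mob_den_ne {c v : ℂ} (h : Complex.abs c * Complex.abs v < 1) :
    (1 : ℂ) - conj' c * v ≠ 0 := by
  apply one_sub_mul_ne
  rwa [map_mul, Complex.abs_conj]

lemma mob_normSq_id (c v : ℂ) :
    Complex.normSq (1 - conj' c * v) - Complex.normSq (v - c)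
      = (1 - Complex.normSq c) * (1 - Complex.normSq v) := by
  simp only [Complex.normSq_apply, Complex.sub_re, Complex.sub_im, Complex.mul_re,
    Complex.mul_im, Complex.conj_re, Complex.conj_im, Complex.one_re, Complex.one_im]
  ring

lemma sq_abs_le_iff {x y : ℂ} (h : Complex.normSq x ≤ Complex.normSq y) :
    Complex.abs x ≤ Complex.abs y := by
  rw [Complex.abs_apply, Complex.abs_apply]
  exact Real.sqrt_le_sqrt h

lemma sq_abs_lt {x y : ℂ} (h : Complex.normSq x < Complex.normSq y) :
    Complex.abs x < Complex.abs y := by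
  rw [Complex.abs_apply, Complex.abs_apply]
  exact Real.sqrt_lt_sqrt (Complex.normSq_nonneg _) h

lemma normSq_eq_sq_abs (x : ℂ) : Complex.normSq x = (Complex.abs x)^2 :=
  (Complex.sq_abs x).symm

lemma Mm_abs_le {c v : ℂ} (hc : Complex.abs c < 1) (hv : Complex.abs v ≤ 1) :
    Complex.abs (Mm c v) ≤ 1 := by
  have hden : (1:ℂ) - conj' c * v ≠ 0 := mob_den_ne (by nlinarith [Complex.abs.nonneg c, Complex.abs.nonneg v])
  rw [Mm, map_div₀, div_le_one (Complex.abs.pos hden)]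
  apply sq_abs_le_iff
  have := mob_normSq_id c v
  have h1 : Complex.normSq c < 1 := by rw [normSq_eq_sq_abs]; nlinarith [Complex.abs.nonneg c]
  have h2 : Complex.normSq v ≤ 1 := by rw [normSq_eq_sq_abs]; nlinarith [Complex.abs.nonneg v]
  nlinarith

lemma Mm_abs_lt {c v : ℂ} (hc : Complex.abs c < 1) (hv : Complex.abs v < 1) :
    Complex.abs (Mm c v) < 1 := by
  have hden : (1:ℂ) - conj' c * v ≠ 0 := mob_den_ne (by nlinarith [Complex.abs.nonneg c, Complex.abs.nonneg v])
  rw [Mm, map_div₀, div_lt_one (Complex.abs.pos hden)]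
  apply sq_abs_lt
  have := mob_normSq_id c v
  have h1 : Complex.normSq c < 1 := by rw [normSq_eq_sq_abs]; nlinarith [Complex.abs.nonneg c]
  have h2 : Complex.normSq v < 1 := by rw [normSq_eq_sq_abs]; nlinarith [Complex.abs.nonneg v]
  nlinarith

lemma Mm_self (c : ℂ) : Mm c c = 0 := by simp [Mm]

lemma Mm_neg_apply (c x : ℂ) : Mm (-c) x = (x + c) / (1 + conj' c * x) := by
  rw [Mm, map_neg]
  ring_nf

lemma Mm_neg_Mm {a v : ℂ} (ha : Complex.abs a < 1) (hv : Complex.abs v < 1) :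
    Mm (-a) (Mm a v) = v := by
  have hden : (1:ℂ) - conj' a * v ≠ 0 := mob_den_ne (by nlinarith [Complex.abs.nonneg a, Complex.abs.nonneg v])
  have h2 : (1:ℂ) - conj' a * a ≠ 0 := mob_den_ne (by nlinarith [Complex.abs.nonneg a])
  have hs1 : Mm a v + a = (1 - conj' a * a) * v / (1 - conj' a * v) := by
    rw [Mm, div_add' _ _ _ hden]; congr 1; ring
  have hs2 : (1:ℂ) + conj' a * Mm a v = (1 - conj' a * a) / (1 - conj' a * v) := by
    rw [Mm]; field_simp; ring
  rw [Mm_neg_apply, hs1, hs2]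
  field_simp

lemma Mm_diffOn_closed {c : ℂ} (hc : Complex.abs c < 1) :
    DifferentiableOn ℂ (Mm c) (closedBall (0:ℂ) 1) := by
  apply DifferentiableOn.div
  · exact (differentiable_id.sub_const c).differentiableOn
  · exact ((differentiable_const (conj' c)).mul differentiable_id |>.const_sub 1).differentiableOn
  · intro v hv
    rw [mem_closedBall_zero_iff, Complex.norm_eq_abs] at hv
    exact mob_den_ne (by nlinarith [Complex.abs.nonneg c, Complex.abs.nonneg v])

lemma Mm_diffOn_ball {c : ℂ} (hc : Complex.abs c ≤ 1) :
    DifferentiableOn ℂ (Mm c) (ball (0:ℂ) 1) := by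
  apply DifferentiableOn.div
  · exact (differentiable_id.sub_const c).differentiableOn
  · exact ((differentiable_const (conj' c)).mul differentiable_id |>.const_sub 1).differentiableOn
  · intro v hv
    rw [mem_ball_zero_iff, Complex.norm_eq_abs] at hv
    exact mob_den_ne (by nlinarith [Complex.abs.nonneg c, Complex.abs.nonneg v])

/-- Schwarz lemma for maps into the closed disk. -/
lemma schwarz_le_closed {f : ℂ → ℂ} (hd : DifferentiableOn ℂ f (ball (0:ℂ) 1)) (h0 : f 0 = 0)
    (hb : ∀ u ∈ ball (0:ℂ) 1, Complex.abs (f u) ≤ 1) {z : ℂ} (hz : z ∈ ball (0:ℂ) 1) :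
    Complex.abs (f z) ≤ Complex.abs z := by
  rcases eq_or_ne z 0 with rfl | hne
  · simp [h0]
  · have hds : ∀ R : ℝ, 1 < R → ‖dslope f 0 z‖ ≤ R := by
      intro R hR
      have hmap : MapsTo f (ball (0:ℂ) 1) (ball (f 0) R) := by
        intro u hu
        rw [h0, mem_ball_zero_iff, Complex.norm_eq_abs]
        exact lt_of_le_of_lt (hb u hu) hR
      have := Complex.norm_dslope_le_div_of_mapsTo_ball hd hmap hz
      simpa using this
    have hd1 : ‖dslope f 0 z‖ ≤ 1 := by
      by_contra hlt
      push_neg at hlt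
      have := hds ((‖dslope f 0 z‖ + 1) / 2) (by linarith)
      linarith
    rw [dslope_of_ne _ hne, slope_def_field, h0, sub_zero, sub_zero,
      Complex.norm_eq_abs, map_div₀] at hd1
    have hzpos : 0 < Complex.abs z := Complex.abs.pos hne
    calc Complex.abs (f z) = Complex.abs (f z) / Complex.abs z * Complex.abs z := by field_simp
    _ ≤ 1 * Complex.abs z := mul_le_mul_of_nonneg_right hd1 hzpos.le
    _ = Complex.abs z := one_mul _

/-- Two-point Schwarz–Pick inequality on the disk, cross-multiplied form,
for maps into the closed disk. -/
lemma spd {g : ℂ → ℂ} (hd : DifferentiableOn ℂ g (ball (0:ℂ) 1))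
    (hg : ∀ u ∈ ball (0:ℂ) 1, Complex.abs (g u) ≤ 1)
    {a b : ℂ} (ha : a ∈ ball (0:ℂ) 1) (hb : b ∈ ball (0:ℂ) 1) :
    Complex.abs (g a - g b) * Complex.abs (1 - conj' a * b)
      ≤ Complex.abs (a - b) * Complex.abs (1 - conj' (g a) * g b) := by
  have ha' := mem_ball_zero_iff.1 ha
  have hb' := mem_ball_zero_iff.1 hb
  rw [Complex.norm_eq_abs] at ha' hb'
  by_cases hga : Complex.abs (g a) = 1
  · have hmax : IsMaxOn (norm ∘ g) (ball (0:ℂ) 1) a := by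
      intro u hu
      simp only [Function.comp_apply, Complex.norm_eq_abs]
      rw [hga]; exact hg u hu
    have heq := Complex.eqOn_of_isPreconnected_of_isMaxOn_norm
      (convex_ball (0:ℂ) 1).isPreconnected isOpen_ball hd ha hmax
    have : g b = g a := heq hb
    rw [this, sub_self]
    simp only [map_zero, zero_mul]
    positivity
  · have hga' : Complex.abs (g a) < 1 := lt_of_le_of_ne (hg a ha) hga
    have hnega : Complex.abs (-a) < 1 := by rwa [Complex.abs.map_neg]
    set θ : ℂ → ℂ := Mm (g a) ∘ g ∘ Mm (-a) with hθ
    have hmapsInner : MapsTo (Mm (-a)) (ball (0:ℂ) 1) (ball (0:ℂ) 1) := by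
      intro v hv
      rw [mem_ball_zero_iff] at hv ⊢
      rw [Complex.norm_eq_abs] at hv ⊢
      exact Mm_abs_lt hnega hv
    have hmapsG : MapsTo g (ball (0:ℂ) 1) (closedBall (0:ℂ) 1) := by
      intro v hv
      rw [mem_closedBall_zero_iff, Complex.norm_eq_abs]
      exact hg v hv
    have hθd : DifferentiableOn ℂ θ (ball (0:ℂ) 1) := by
      apply (Mm_diffOn_closed hga').comp
        (hd.comp (Mm_diffOn_ball hnega.le) hmapsInner)
      exact fun v hv => hmapsG (hmapsInner hv)
    have hθ0 : θ 0 = 0 := by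
      have h1 : Mm (-a) 0 = a := by
        rw [Mm_neg_apply]; simp
      simp only [hθ, Function.comp_apply, h1, Mm_self]
    have hθle : ∀ u ∈ ball (0:ℂ) 1, Complex.abs (θ u) ≤ 1 := fun u hu =>
      Mm_abs_le hga' (hg _ (hmapsInner hu))
    have hMab : Mm a b ∈ ball (0:ℂ) 1 := by
      rw [mem_ball_zero_iff, Complex.norm_eq_abs]
      exact Mm_abs_lt ha' hb'
    have key := schwarz_le_closed hθd hθ0 hθle hMab
    have hval : θ (Mm a b) = Mm (g a) (g b) := by
      simp only [hθ, Function.comp_apply, Mm_neg_Mm ha' hb']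
    rw [hval] at key
    have d1 : (1:ℂ) - conj' (g a) * g b ≠ 0 := by
      apply mob_den_ne
      nlinarith [Complex.abs.nonneg (g a), Complex.abs.nonneg (g b), hg b hb]
    have d2 : (1:ℂ) - conj' a * b ≠ 0 := by
      apply mob_den_ne
      nlinarith [Complex.abs.nonneg a, Complex.abs.nonneg b]
    rw [Mm, Mm, map_div₀, map_div₀,
      div_le_div_iff₀ (Complex.abs.pos d1) (Complex.abs.pos d2)] at key
    calc Complex.abs (g a - g b) * Complex.abs (1 - conj' a * b)
        = Complex.abs (g b - g a) * Complex.abs (1 - conj' a * b) := by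
          rw [Complex.abs.map_sub]
      _ ≤ Complex.abs (b - a) * Complex.abs (1 - conj' (g a) * g b) := key
      _ = Complex.abs (a - b) * Complex.abs (1 - conj' (g a) * g b) := by
          rw [Complex.abs.map_sub]
lemma pdd_pos {a b : ℂ} (ha : a ∈ UHP) (hb : b ∈ UHP) (hne : a ≠ b) : 0 < pdd a b := by
  rw [pdd, Bmap]
  apply Complex.abs.pos
  exact div_ne_zero (sub_ne_zero.2 hne) (sub_conj_ne ha hb)

lemma pdd_abs_eq (a b : ℂ) :
    pdd a b = Complex.abs (a - b) / Complex.abs (a - conj' b) := by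
  rw [pdd, Bmap, map_div₀]

lemma iter_diffOn {F : ℂ → ℂ} (hd : DifferentiableOn ℂ F UHP) (hm : MapsTo F UHP UHP) :
    ∀ k, DifferentiableOn ℂ (F^[k]) UHP := by
  intro k
  induction k with
  | zero => simpa using differentiableOn_id
  | succ k ih =>
    rw [Function.iterate_succ']
    exact hd.comp ih (hm.iterate k)

lemma real_est {u v E R η : ℝ} (hu0 : 0 ≤ u) (hu1 : u ≤ 1) (hR0 : 0 ≤ R) (hR1 : R < 1)
    (hE0 : 0 ≤ E) (hE : E ≤ R * ((1 - u^2) + u*E)) (hEv : u - E ≤ v) (hηu : 1 - η ≤ u)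
    (hηC : η * (1 + R) ≤ (1 - R)/2) : 1/2 ≤ v := by
  have hη0 : 0 ≤ η := by linarith
  have h1 : E * (1 - R*u) ≤ R*(1-u^2) := by nlinarith
  have h2 : 0 < 1 - R*u := by nlinarith
  have h3 : E * (1 - R) ≤ 2*R*η := by
    have ha : E * (1 - R) ≤ E * (1 - R*u) := by
      nlinarith [mul_nonneg (mul_nonneg hE0 hR0) (sub_nonneg.2 hu1)]
    have h4 : 1 - u^2 ≤ 2*η := by nlinarith
    have hb : R*(1-u^2) ≤ 2*R*η := by nlinarith [mul_le_mul_of_nonneg_left h4 hR0]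
    linarith
  have hR1' : 0 < 1 - R := by linarith
  have k1 : (1-R)*(u - E) ≤ (1-R)*v := mul_le_mul_of_nonneg_left hEv hR1'.le
  have k2 : (1-R)*(1-η) ≤ (1-R)*u := mul_le_mul_of_nonneg_left hηu hR1'.le
  nlinarith [k1, k2, h3, hηC, hR1']

set_option maxHeartbeats 1600000 in
/-- The key rigidity argument: if the one-step distances of the base orbit tend to `0`,
then the distance between any two orbits tends to `0`. -/
lemma crux {F : ℂ → ℂ} (hd : DifferentiableOn ℂ F UHP) (hm : MapsTo F UHP UHP)
    (hfix : ∀ w ∈ UHP, F w ≠ w) {w₀ x : ℂ} (hw₀ : w₀ ∈ UHP) (hx : x ∈ UHP)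
    (hσ0 : Tendsto (fun n => pdd (F^[n+1] w₀) (F^[n] w₀)) atTop (nhds 0)) :
    Tendsto (fun n => pdd (F^[n] x) (F^[n] w₀)) atTop (nhds 0) := by
  set ζ : ℕ → ℂ := fun n => F^[n] w₀ with hζ
  set ξ : ℕ → ℂ := fun n => F^[n] x with hξ
  have hζU : ∀ n, ζ n ∈ UHP := fun n => (hm.iterate n) hw₀
  have hξU : ∀ n, ξ n ∈ UHP := fun n => (hm.iterate n) hx
  set d : ℕ → ℝ := fun n => pdd (ξ n) (ζ n) with hdDef
  set σ : ℕ → ℝ := fun n => pdd (ζ (n+1)) (ζ n) with hσDef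
  have hdA : Antitone d := by
    apply antitone_nat_of_succ_le
    intro n
    have h1 : ξ (n+1) = F (ξ n) := Function.iterate_succ_apply' F n x
    have h2 : ζ (n+1) = F (ζ n) := Function.iterate_succ_apply' F n w₀
    show pdd (ξ (n+1)) (ζ (n+1)) ≤ pdd (ξ n) (ζ n)
    rw [h1, h2]
    exact pdd_contract hd hm (hξU n) (hζU n)
  have hσpos : ∀ n, 0 < σ n := by
    intro n
    apply pdd_pos (hζU (n+1)) (hζU n)
    rw [show ζ (n+1) = F (ζ n) from Function.iterate_succ_apply' F n w₀]
    exact hfix _ (hζU n)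
  have hbdd : BddBelow (range d) := ⟨0, by rintro r ⟨n, rfl⟩; exact pdd_nonneg _ _⟩
  set L : ℝ := ⨅ n, d n with hLdef
  have hdT : Tendsto d atTop (nhds L) := tendsto_atTop_ciInf hdA hbdd
  have hL0 : 0 ≤ L := le_ciInf fun n => pdd_nonneg _ _
  rcases eq_or_lt_of_le hL0 with hL | hL
  · rw [← hL] at hdT; exact hdT
  exfalso
  have hdL : ∀ n, L ≤ d n := fun n => ciInf_le hbdd n
  set c₀ : ℝ := d 0 with hc₀def
  have hdc₀ : ∀ n, d n ≤ c₀ := fun n => hdA (Nat.zero_le n)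
  have hc₀1 : c₀ < 1 := pdd_lt_one hx hw₀
  have hc₀0 : 0 ≤ c₀ := pdd_nonneg _ _
  set R : ℝ := (1 + c₀)/2 with hRdef
  have hR1 : R < 1 := by rw [hRdef]; linarith
  have hR0 : 0 ≤ R := by rw [hRdef]; linarith
  set C : ℝ := (1 + R)/(1 - R) with hCdef
  have hCpos : 0 < C := by apply div_pos <;> linarith
  have hev1 : ∀ᶠ n in atTop, d n < L + L/(2*C) :=
    hdT.eventually (eventually_lt_nhds (by nlinarith [div_pos hL (by linarith : (0:ℝ) < 2*C)]))
  have hev2 : ∀ᶠ n in atTop, σ n < (1 - c₀)/4 :=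
    hσ0.eventually (eventually_lt_nhds (by linarith))
  obtain ⟨m, hm1, hm2⟩ := (hev1.and hev2).exists
  set p : ℂ := Bmap (ζ m) (ξ m) with hpdef
  set ν : ℂ := Bmap (ζ m) (ζ (m+1)) with hνdef
  have hpabs : Complex.abs p = d m := rfl
  have hνabs : Complex.abs ν = σ m := rfl
  have hpball : p ∈ ball (0:ℂ) 1 := Bmap_mem_ball (hξU m) (hζU m)
  have hνball : ν ∈ ball (0:ℂ) 1 := Bmap_mem_ball (hζU (m+1)) (hζU m)
  have hdm0 : 0 < d m := lt_of_lt_of_le hL (hdL m)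
  have hppos : 0 < Complex.abs p := by rw [hpabs]; exact hdm0
  have hνpos : 0 < Complex.abs ν := by rw [hνabs]; exact hσpos m
  have hpne : p ≠ 0 := by intro h; rw [h] at hppos; simp at hppos
  have hνne : ν ≠ 0 := by intro h; rw [h] at hνpos; simp at hνpos
  -- the quantity η
  set η : ℝ := 1 - L / d m with hηdef
  have hη0 : 0 ≤ η := by
    rw [hηdef, sub_nonneg]
    exact (div_le_one hdm0).2 (hdL m)
  have hηC : η * (1 + R) ≤ (1 - R)/2 := by
    have hCeq : C * (1 - R) = 1 + R := by
      rw [hCdef, div_mul_cancel₀ _ (ne_of_gt (by linarith : (0:ℝ) < 1 - R))]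
    have h2C : (0:ℝ) < 2*C := by linarith
    have hfact : (d m - L) * (2*C) < L := by
      have hstep := mul_lt_mul_of_pos_right (show d m - L < L/(2*C) by linarith) h2C
      rwa [div_mul_cancel₀ _ (ne_of_gt h2C)] at hstep
    have hηdm : η * d m = d m - L := by rw [hηdef]; field_simp
    have h6 : η * d m * (2*C) < L := by rw [hηdm]; exact hfact
    have hηhalf : η * (2*C) ≤ 1 := by nlinarith [h6, hdL m, hdm0]
    have h8 : η * C ≤ 1/2 := by
      have h8' := hηhalf
      ring_nf at h8' ⊢
      linarith
    calc η * (1+R) = η * C * (1-R) := by rw [← hCeq]; ring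
      _ ≤ (1/2) * (1-R) := mul_le_mul_of_nonneg_right h8 (by linarith)
      _ = (1-R)/2 := by ring
  -- main step
  have main : ∀ k, σ m / 2 ≤ σ (m + k) := by
    intro k
    set Hk : ℂ → ℂ := Bmap (ζ (m+k)) ∘ F^[k] ∘ Binv (ζ m) with hHkdef
    have hHkd : DifferentiableOn ℂ Hk (ball (0:ℂ) 1) := by
      apply (Bmap_diffOn (hζU (m+k))).comp
        ((iter_diffOn hd hm k).comp (Binv_diffOn (ζ m)) (Binv_mapsTo (hζU m)))
      exact fun v hv => (hm.iterate k) (Binv_mem (hζU m) hv)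
    have hHk0 : Hk 0 = 0 := by
      have h1 : F^[k] (ζ m) = ζ (m+k) := by
        rw [hζ]
        simp only []
        rw [← Function.iterate_add_apply F k m w₀, Nat.add_comm]
      simp only [hHkdef, Function.comp_apply, Binv_zero, h1, Bmap_self]
    have hHkp : Hk p = Bmap (ζ (m+k)) (ξ (m+k)) := by
      have h1 : Binv (ζ m) p = ξ m := Binv_Bmap (hζU m) (hξU m)
      have h2 : F^[k] (ξ m) = ξ (m+k) := by
        rw [hξ]
        simp only []
        rw [← Function.iterate_add_apply F k m x, Nat.add_comm]
      simp only [hHkdef, Function.comp_apply, h1, h2]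
    have hHkν : Hk ν = Bmap (ζ (m+k)) (ζ (m+k+1)) := by
      have h1 : Binv (ζ m) ν = ζ (m+1) := Binv_Bmap (hζU m) (hζU (m+1))
      have h2 : F^[k] (ζ (m+1)) = ζ (m+k+1) := by
        rw [hζ]
        simp only []
        rw [← Function.iterate_add_apply F k (m+1) w₀]
        congr 1
        omega
      simp only [hHkdef, Function.comp_apply, h1, h2]
    set h : ℂ → ℂ := dslope Hk 0 with hhdef
    have hhd : DifferentiableOn ℂ h (ball (0:ℂ) 1) :=
      (differentiableOn_dslope (ball_mem_nhds _ one_pos)).2 hHkd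
    have hhle : ∀ u ∈ ball (0:ℂ) 1, Complex.abs (h u) ≤ 1 := by
      intro u hu
      have hmaps' : MapsTo Hk (ball (0:ℂ) 1) (ball (Hk 0) 1) := by
        rw [hHk0]
        exact fun v hv => Bmap_mem_ball ((hm.iterate k) (Binv_mem (hζU m) hv)) (hζU (m+k))
      have := Complex.norm_dslope_le_div_of_mapsTo_ball hHkd hmaps' hu
      simpa [Complex.abs_def'] using this
    have hvalp : h p = Hk p / p := by
      rw [hhdef, dslope_of_ne _ hpne, slope_def_field, hHk0, sub_zero, sub_zero]
    have hvalν : h ν = Hk ν / ν := by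
      rw [hhdef, dslope_of_ne _ hνne, slope_def_field, hHk0, sub_zero, sub_zero]
    have habsp : Complex.abs (h p) = d (m+k) / d m := by
      rw [hvalp, map_div₀, hHkp, hpabs]; rfl
    have habsν : Complex.abs (h ν) = σ (m+k) / σ m := by
      rw [hvalν, map_div₀, hHkν, hνabs]; rfl
    have hsp := spd hhd hhle hpball hνball
    -- r ≤ R
    have hrR : Complex.abs (p - ν) ≤ R * Complex.abs (1 - conj' p * ν) := by
      have h1 : Complex.abs (p - ν) ≤ c₀ + σ m := by
        have := norm_sub_le p ν
        rw [Complex.norm_eq_abs, Complex.norm_eq_abs, Complex.norm_eq_abs] at this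
        rw [hpabs, hνabs] at this
        linarith [hdc₀ m]
      have h2 : 1 - c₀ * σ m ≤ Complex.abs (1 - conj' p * ν) := by
        have htri := Complex.abs.add_le (1 - conj' p * ν) (conj' p * ν)
        rw [sub_add_cancel] at htri
        have habsmul : Complex.abs (conj' p * ν) ≤ c₀ * σ m := by
          rw [map_mul, Complex.abs_conj, hpabs, hνabs]
          exact mul_le_mul (hdc₀ m) le_rfl (hσpos m).le hc₀0
        have : Complex.abs (1:ℂ) = 1 := by simp
        linarith [this ▸ htri]
      have hσm0 : 0 ≤ σ m := (hσpos m).le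
      have hσm4 : σ m ≤ (1 - c₀)/4 := hm2.le
      have hscal : c₀ + σ m ≤ R * (1 - c₀ * σ m) := by
        rw [hRdef]
        nlinarith [sq_nonneg c₀, mul_nonneg hc₀0 hσm0]
      calc Complex.abs (p - ν) ≤ c₀ + σ m := h1
        _ ≤ R * (1 - c₀ * σ m) := hscal
        _ ≤ R * Complex.abs (1 - conj' p * ν) := mul_le_mul_of_nonneg_left h2 hR0
    set X : ℝ := Complex.abs (h p) with hXdef
    set Y : ℝ := Complex.abs (h ν) with hYdef
    set E : ℝ := Complex.abs (h p - h ν) with hEdef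
    have hX1 : X ≤ 1 := hhle p hpball
    have hX0 : 0 ≤ X := Complex.abs.nonneg _
    have hE0 : 0 ≤ E := Complex.abs.nonneg _
    have hXη : 1 - η ≤ X := by
      rw [hηdef, sub_sub_cancel, habsp]
      exact (div_le_div_iff_of_pos_right hdm0).2 (hdL (m+k))
    -- E ≤ R * ((1 - X^2) + X*E)
    have hApos : 0 < Complex.abs (1 - conj' p * ν) := by
      apply Complex.abs.pos
      apply mob_den_ne
      rw [hpabs, hνabs]
      nlinarith [hσpos m, hdm0, hdc₀ m, hm2]
    have hER : E ≤ R * Complex.abs (1 - conj' (h p) * h ν) := by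
      have step := hsp.trans (mul_le_mul_of_nonneg_right hrR (Complex.abs.nonneg _))
      have step2 : E * Complex.abs (1 - conj' p * ν)
          ≤ (R * Complex.abs (1 - conj' (h p) * h ν)) * Complex.abs (1 - conj' p * ν) := by
        calc E * Complex.abs (1 - conj' p * ν)
            ≤ R * Complex.abs (1 - conj' p * ν) * Complex.abs (1 - conj' (h p) * h ν) := step
          _ = (R * Complex.abs (1 - conj' (h p) * h ν)) * Complex.abs (1 - conj' p * ν) := by
              ring
      exact le_of_mul_le_mul_right step2 hApos
    have hG : Complex.abs (1 - conj' (h p) * h ν) ≤ (1 - X^2) + X * E := by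
      have hid : (1:ℂ) - conj' (h p) * h ν
          = (1 - conj' (h p) * h p) + conj' (h p) * (h p - h ν) := by ring
      have h1 : Complex.abs ((1:ℂ) - conj' (h p) * h p) = 1 - X^2 := by
        rw [← Complex.normSq_eq_conj_mul_self]
        rw [show (1:ℂ) - (Complex.normSq (h p) : ℂ) = ((1 - Complex.normSq (h p) : ℝ) : ℂ) by
          push_cast; ring]
        rw [Complex.abs_ofReal, _root_.abs_of_nonneg (by rw [normSq_eq_sq_abs]; nlinarith)]
        rw [normSq_eq_sq_abs]
      have h2 : Complex.abs (conj' (h p) * (h p - h ν)) = X * E := by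
        rw [map_mul, Complex.abs_conj]
      calc Complex.abs (1 - conj' (h p) * h ν)
          = Complex.abs ((1 - conj' (h p) * h p) + conj' (h p) * (h p - h ν)) := by rw [← hid]
        _ ≤ Complex.abs ((1:ℂ) - conj' (h p) * h p)
            + Complex.abs (conj' (h p) * (h p - h ν)) := Complex.abs.add_le _ _
        _ = (1 - X^2) + X * E := by rw [h1, h2]
    have hEfin : E ≤ R * ((1 - X^2) + X*E) :=
      hER.trans (mul_le_mul_of_nonneg_left hG hR0)
    have hEvY : X - E ≤ Y := by
      have : X ≤ Y + E := by
        calc X = Complex.abs (h ν + (h p - h ν)) := by rw [hXdef]; congr 1; ring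
          _ ≤ Y + E := Complex.abs.add_le _ _
      linarith
    have hY : 1/2 ≤ Y := real_est hX0 hX1 hR0 hR1 hE0 hEfin hEvY hXη hηC
    rw [habsν] at hY
    calc σ m / 2 = σ m * (1/2) := by ring
      _ ≤ σ m * (σ (m+k) / σ m) := by
          apply mul_le_mul_of_nonneg_left hY (hσpos m).le
      _ = σ (m+k) := by rw [mul_comm, div_mul_cancel₀ _ (ne_of_gt (hσpos m))]
  -- contradiction with σ → 0
  have hev3 : ∀ᶠ n in atTop, σ n < σ m / 2 :=
    hσ0.eventually (eventually_lt_nhds (by positivity))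
  obtain ⟨n, hn1, hn2⟩ := (hev3.and (eventually_ge_atTop m)).exists
  have hmn := main (n - m)
  rw [Nat.add_sub_cancel' hn2] at hmn
  linarith
lemma pdd_iter_le {F : ℂ → ℂ} (hd : DifferentiableOn ℂ F UHP) (hm : MapsTo F UHP UHP)
    {a b : ℂ} (ha : a ∈ UHP) (hb : b ∈ UHP) :
    ∀ n, pdd (F^[n] a) (F^[n] b) ≤ pdd a b := by
  intro n
  induction n with
  | zero => simp
  | succ n ih =>
    rw [Function.iterate_succ_apply' F n a, Function.iterate_succ_apply' F n b]
    exact le_trans (pdd_contract hd hm ((hm.iterate n) ha) ((hm.iterate n) hb)) ih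

lemma ratio_bound {a b : ℂ} (ha : a ∈ UHP) (hb : b ∈ UHP) {c : ℝ} (hc : pdd a b ≤ c)
    (hc1 : c < 1) : Complex.abs (a - b) ≤ 2*c/(1-c) * b.im := by
  have hden := sub_conj_ne ha hb
  have hdpos : 0 < Complex.abs (a - conj' b) := Complex.abs.pos hden
  have h1 : Complex.abs (a - b) ≤ c * Complex.abs (a - conj' b) := by
    rw [pdd_abs_eq, div_le_iff₀ hdpos] at hc
    exact hc
  have h2 : Complex.abs (b - conj' b) = 2 * b.im := by
    rw [Complex.sub_conj, map_mul, Complex.abs_ofReal, Complex.abs_I, mul_one,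
      _root_.abs_of_nonneg (by linarith [mem_UHP.1 hb] : (0:ℝ) ≤ 2 * b.im)]
  have h3 : Complex.abs (a - conj' b) ≤ Complex.abs (a - b) + 2*b.im := by
    have hid : a - conj' b = (a - b) + (b - conj' b) := by ring
    calc Complex.abs (a - conj' b) = Complex.abs ((a - b) + (b - conj' b)) := by rw [← hid]
      _ ≤ Complex.abs (a - b) + Complex.abs (b - conj' b) := Complex.abs.add_le _ _
      _ = Complex.abs (a - b) + 2*b.im := by rw [h2]
  have hc0 : 0 ≤ c := le_trans (pdd_nonneg a b) hc
  have h4 : Complex.abs (a - b) * (1 - c) ≤ 2*c*b.im := by nlinarith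
  rw [show 2*c/(1-c)*b.im = 2*c*b.im/(1-c) by ring, le_div_iff₀ (by linarith : (0:ℝ) < 1 - c)]
  linarith

lemma pointwise {F : ℂ → ℂ} (hd : DifferentiableOn ℂ F UHP) (hm : MapsTo F UHP UHP)
    (hfix : ∀ w ∈ UHP, F w ≠ w)
    (hesc : ∀ K ⊆ UHP, IsCompact K → ∀ M : ℝ,
      ∀ᶠ n in atTop, ∀ w ∈ K, M ≤ Complex.abs (F^[n] w))
    (hnt : ∀ w : ℕ → ℂ, (∀ n, w n ∈ UHP) → NonTangToInf w →
      Tendsto (fun n => F (w n) / w n) atTop (nhds 1))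
    {w₀ x : ℂ} (hw₀ : w₀ ∈ UHP) (hx : x ∈ UHP) :
    Tendsto (fun n => Complex.abs (F^[n] x / F^[n] w₀ - 1)) atTop (nhds 0) := by
  set ζ : ℕ → ℂ := fun n => F^[n] w₀ with hζ
  set ξ : ℕ → ℂ := fun n => F^[n] x with hξ
  have hζU : ∀ n, ζ n ∈ UHP := fun n => (hm.iterate n) hw₀
  have hξU : ∀ n, ξ n ∈ UHP := fun n => (hm.iterate n) hx
  have hζne : ∀ n, ζ n ≠ 0 := by
    intro n h
    have := mem_UHP.1 (hζU n)
    rw [h] at this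
    simp at this
  have hζpos : ∀ n, 0 < Complex.abs (ζ n) := fun n => Complex.abs.pos (hζne n)
  have habsTop : Tendsto (fun n => Complex.abs (ζ n)) atTop atTop := by
    rw [Filter.tendsto_atTop]
    intro M
    have := hesc {w₀} (singleton_subset_iff.2 hw₀) isCompact_singleton M
    exact this.mono (fun n hn => hn w₀ rfl)
  set dd : ℕ → ℝ := fun n => pdd (ξ n) (ζ n) with hddDef
  set c₀ : ℝ := pdd x w₀ with hc₀def
  have hc₀1 : c₀ < 1 := pdd_lt_one hx hw₀
  have hc₀0 : 0 ≤ c₀ := pdd_nonneg _ _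
  have hddle : ∀ n, dd n ≤ c₀ := fun n => pdd_iter_le hd hm hx hw₀ n
  have hkey : ∀ n, Complex.abs (ξ n / ζ n - 1)
      = Complex.abs (ξ n - ζ n) / Complex.abs (ζ n) := by
    intro n
    rw [div_sub_one (hζne n), map_div₀]
  have him_le : ∀ n, (ζ n).im ≤ Complex.abs (ζ n) := fun n => Complex.im_le_abs (ζ n)
  have him_pos : ∀ n, 0 < (ζ n).im := fun n => mem_UHP.1 (hζU n)
  -- step distances
  set σ : ℕ → ℝ := fun n => pdd (ζ (n+1)) (ζ n) with hσDef
  have hσA : Antitone σ := by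
    apply antitone_nat_of_succ_le
    intro n
    show pdd (ζ (n+2)) (ζ (n+1)) ≤ pdd (ζ (n+1)) (ζ n)
    have e1 : ζ (n+2) = F (ζ (n+1)) := Function.iterate_succ_apply' F (n+1) w₀
    have e2 : ζ (n+1) = F (ζ n) := Function.iterate_succ_apply' F n w₀
    calc pdd (ζ (n+2)) (ζ (n+1)) = pdd (F (ζ (n+1))) (F (ζ n)) := by rw [e1, e2]
      _ ≤ pdd (ζ (n+1)) (ζ n) := pdd_contract hd hm (hζU (n+1)) (hζU n)
  have hσbdd : BddBelow (range σ) := ⟨0, by rintro r ⟨n, rfl⟩; exact pdd_nonneg _ _⟩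
  set σstar : ℝ := ⨅ n, σ n with hσstar
  have hσT : Tendsto σ atTop (nhds σstar) := tendsto_atTop_ciInf hσA hσbdd
  have hσstar0 : 0 ≤ σstar := le_ciInf fun n => pdd_nonneg _ _
  rcases eq_or_lt_of_le hσstar0 with hzero | hpos
  · -- zero hyperbolic step : use crux
    have hσ0 : Tendsto σ atTop (nhds 0) := by rwa [← hzero] at hσT
    have hddT : Tendsto dd atTop (nhds 0) := crux hd hm hfix hw₀ hx hσ0
    apply squeeze_zero (fun n => Complex.abs.nonneg _) (g := fun n => (2/(1-c₀)) * dd n)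
    · intro n
      rw [hkey n]
      have hb := ratio_bound (hξU n) (hζU n) (le_refl (dd n)) (lt_of_le_of_lt (hddle n) hc₀1)
      have h5 : Complex.abs (ξ n - ζ n) ≤ 2*(dd n)/(1-c₀) * (ζ n).im := by
        apply hb.trans
        apply mul_le_mul_of_nonneg_right _ (him_pos n).le
        apply div_le_div_of_nonneg_left (by linarith [pdd_nonneg (ξ n) (ζ n)]) (by linarith)
          (by linarith [hddle n])
      rw [div_le_iff₀ (hζpos n)]
      calc Complex.abs (ξ n - ζ n) ≤ 2*(dd n)/(1-c₀) * (ζ n).im := h5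
        _ ≤ 2*(dd n)/(1-c₀) * Complex.abs (ζ n) := by
            apply mul_le_mul_of_nonneg_left (him_le n)
            apply div_nonneg (by linarith [pdd_nonneg (ξ n) (ζ n)]) (by linarith)
        _ = 2/(1-c₀) * dd n * Complex.abs (ζ n) := by ring
    · have := hddT.const_mul (2/(1-c₀))
      simpa using this
  · -- positive hyperbolic step : orbit is tangential
    have hστ : ∀ n, σstar ≤ σ n := fun n => ciInf_le hσbdd n
    have hs0 : Tendsto (fun n => (ζ n).im / Complex.abs (ζ n)) atTop (nhds 0) := by
      rw [NormedAddCommGroup.tendsto_nhds_zero]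
      intro ε hε
      by_contra hcon
      rw [Filter.not_eventually] at hcon
      have hfreq : ∃ᶠ n in atTop, ε ≤ (ζ n).im / Complex.abs (ζ n) := by
        apply hcon.mono
        intro n hn
        rw [Real.norm_eq_abs, _root_.abs_of_nonneg (div_nonneg (him_pos n).le (Complex.abs.nonneg _))] at hn
        linarith [not_lt.1 hn]
      obtain ⟨φ, hφmono, hφP⟩ := Filter.extraction_of_frequently_atTop hfreq
      set w : ℕ → ℂ := fun k => ζ (φ k) with hwdef
      have hwU : ∀ k, w k ∈ UHP := fun k => hζU (φ k)
      have hwslope : ∀ k, ε * Complex.abs (w k) ≤ (w k).im := by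
        intro k
        have := hφP k
        rw [le_div_iff₀ (hζpos (φ k))] at this
        linarith
      have hwnt : NonTangToInf w :=
        ⟨habsTop.comp hφmono.tendsto_atTop, ε, hε, hwslope⟩
      have hq := hnt w hwU hwnt
      have hq0 : Tendsto (fun k => Complex.abs (F (w k) / w k - 1)) atTop (nhds 0) := by
        have h6 : Tendsto (fun k => F (w k) / w k - 1) atTop (nhds 0) := by
          simpa using hq.sub (tendsto_const_nhds (x := (1:ℂ)))
        have := tendsto_zero_iff_norm_tendsto_zero.1 h6
        simpa [Complex.norm_eq_abs] using this
      have hwne : ∀ k, w k ≠ 0 := fun k => hζne (φ k)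
      have hwpos : ∀ k, 0 < Complex.abs (w k) := fun k => hζpos (φ k)
      have hσle : ∀ k, σ (φ k) ≤ Complex.abs (F (w k) / w k - 1) / ε := by
        intro k
        have hFw : F (w k) ∈ UHP := hm (hwU k)
        have hζsucc : ζ (φ k + 1) = F (w k) := Function.iterate_succ_apply' F (φ k) w₀
        have hnum : Complex.abs (F (w k) - w k)
            = Complex.abs (w k) * Complex.abs (F (w k) / w k - 1) := by
          rw [← map_mul]
          congr 1
          field_simp [hwne k]
        have hden : ε * Complex.abs (w k) ≤ Complex.abs (F (w k) - conj' (w k)) := by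
          have h7 : (F (w k) - conj' (w k)).im = (F (w k)).im + (w k).im := by
            rw [Complex.sub_im, Complex.conj_im, sub_neg_eq_add]
          have h8 : (w k).im ≤ Complex.abs (F (w k) - conj' (w k)) := by
            calc (w k).im ≤ (F (w k) - conj' (w k)).im := by
                  rw [h7]; linarith [mem_UHP.1 hFw]
              _ ≤ Complex.abs (F (w k) - conj' (w k)) := Complex.im_le_abs _
          linarith [hwslope k]
        have hεw : 0 < ε * Complex.abs (w k) := mul_pos hε (hwpos k)
        show pdd (ζ (φ k + 1)) (ζ (φ k)) ≤ _
        rw [hζsucc, pdd_abs_eq]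
        calc Complex.abs (F (w k) - w k) / Complex.abs (F (w k) - conj' (w k))
            ≤ Complex.abs (F (w k) - w k) / (ε * Complex.abs (w k)) :=
              div_le_div_of_nonneg_left (Complex.abs.nonneg _) hεw hden
          _ = Complex.abs (F (w k) / w k - 1) / ε := by
              rw [hnum, mul_comm ε (Complex.abs (w k)),
                mul_div_mul_left _ _ (ne_of_gt (hwpos k))]
      have hσφT : Tendsto (fun k => σ (φ k)) atTop (nhds 0) := by
        apply squeeze_zero (fun k => pdd_nonneg _ _) hσle
        have := hq0.div_const ε
        simpa using this
      obtain ⟨k, hk⟩ := (hσφT.eventually (eventually_lt_nhds hpos)).exists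
      linarith [hστ (φ k)]
    -- conclude from tangential convergence
    apply squeeze_zero (fun n => Complex.abs.nonneg _)
      (g := fun n => (2*c₀/(1-c₀)) * ((ζ n).im / Complex.abs (ζ n)))
    · intro n
      rw [hkey n, div_le_iff₀ (hζpos n)]
      have hb := ratio_bound (hξU n) (hζU n) (hddle n) hc₀1
      rw [mul_assoc, div_mul_cancel₀ _ (ne_of_gt (hζpos n))]
      exact hb
    · have := hs0.const_mul (2*c₀/(1-c₀))
      simpa using this
lemma isOpen_UHP : IsOpen UHP :=
  isOpen_lt continuous_const Complex.continuous_im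

lemma pdd_self (x : ℂ) : pdd x x = 0 := by
  rw [pdd, Bmap_self, map_zero]

end Stmt13Aux

open Stmt13Aux in
theorem stmt13 (F : ℂ → ℂ) (hF : ParabolicAtInf F) (w₀ : ℂ) (hw₀ : w₀ ∈ UHP) :
    TendstoLocallyUniformlyOn (fun n w => F^[n] w / F^[n] w₀) (fun _ => 1) atTop UHP := by
  obtain ⟨⟨hd, hm⟩, hfix, hesc, hnt⟩ := hF
  rw [Metric.tendstoLocallyUniformlyOn_iff]
  intro ε hε x hx
  set δ : ℝ := min (1/2) (ε/16) with hδdef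
  have hδpos : 0 < δ := lt_min (by norm_num) (by linarith)
  have hδhalf : δ ≤ 1/2 := min_le_left _ _
  have hδε : δ ≤ ε/16 := min_le_right _ _
  have hδ1 : δ < 1 := by linarith
  have hcont : ContinuousOn (fun y => pdd y x) UHP := by
    apply Complex.continuous_abs.comp_continuousOn
    apply ContinuousOn.div
    · exact (continuous_id.sub continuous_const).continuousOn
    · exact (continuous_id.sub continuous_const).continuousOn
    · exact fun y hy => sub_conj_ne hy hx
  set U : Set ℂ := UHP ∩ (fun y => pdd y x) ⁻¹' (Iio δ) with hUdef
  have hUopen : IsOpen U := hcont.isOpen_inter_preimage isOpen_UHP isOpen_Iio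
  have hxU : x ∈ U := ⟨hx, by simp [mem_preimage, pdd_self, hδpos]⟩
  refine ⟨U, mem_nhdsWithin_of_mem_nhds (hUopen.mem_nhds hxU), ?_⟩
  have hpt := pointwise hd hm hfix hesc hnt hw₀ hx
  have hev : ∀ᶠ n in atTop, Complex.abs (F^[n] x / F^[n] w₀ - 1) < min (ε/4) 1 :=
    hpt.eventually (eventually_lt_nhds (lt_min (by linarith) one_pos))
  filter_upwards [hev] with n hn y hy
  obtain ⟨hyU, hyd⟩ := hy
  have hydδ : pdd y x ≤ δ := le_of_lt hyd
  have hζU : F^[n] w₀ ∈ UHP := (hm.iterate n) hw₀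
  have haU : F^[n] x ∈ UHP := (hm.iterate n) hx
  have hbU : F^[n] y ∈ UHP := (hm.iterate n) hyU
  have hζne : F^[n] w₀ ≠ 0 := by
    intro h
    have := mem_UHP.1 hζU
    rw [h] at this
    simp at this
  have habsζ : 0 < Complex.abs (F^[n] w₀) := Complex.abs.pos hζne
  have hba : pdd (F^[n] y) (F^[n] x) ≤ δ := (pdd_iter_le hd hm hyU hx n).trans hydδ
  have h1 : Complex.abs (F^[n] y - F^[n] x) ≤ 2*δ/(1-δ) * (F^[n] x).im :=
    ratio_bound hbU haU hba hδ1
  have h2 : 2*δ/(1-δ) ≤ 4*δ := by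
    rw [div_le_iff₀ (by linarith : (0:ℝ) < 1 - δ)]
    nlinarith
  have haim0 : 0 ≤ (F^[n] x).im := (mem_UHP.1 haU).le
  have haim : (F^[n] x).im ≤ Complex.abs (F^[n] x) := Complex.im_le_abs _
  have habs_a : Complex.abs (F^[n] x) ≤ 2 * Complex.abs (F^[n] w₀) := by
    have hq : Complex.abs (F^[n] x / F^[n] w₀) ≤ 2 := by
      have htri : Complex.abs (F^[n] x / F^[n] w₀)
          ≤ Complex.abs (F^[n] x / F^[n] w₀ - 1) + 1 := by
        calc Complex.abs (F^[n] x / F^[n] w₀)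
            = Complex.abs ((F^[n] x / F^[n] w₀ - 1) + 1) := by ring_nf
          _ ≤ Complex.abs (F^[n] x / F^[n] w₀ - 1) + Complex.abs (1:ℂ) :=
              Complex.abs.add_le _ _
          _ = Complex.abs (F^[n] x / F^[n] w₀ - 1) + 1 := by rw [map_one]
      have := lt_of_lt_of_le hn (min_le_right _ _)
      linarith
    rw [map_div₀, div_le_iff₀ habsζ] at hq
    linarith
  have hdecomp : F^[n] y / F^[n] w₀ - 1
      = (F^[n] y - F^[n] x) / F^[n] w₀ + (F^[n] x / F^[n] w₀ - 1) := by
    field_simp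
    ring
  have hterm1 : Complex.abs ((F^[n] y - F^[n] x) / F^[n] w₀) ≤ ε/2 := by
    rw [map_div₀, div_le_iff₀ habsζ]
    calc Complex.abs (F^[n] y - F^[n] x) ≤ 2*δ/(1-δ) * (F^[n] x).im := h1
      _ ≤ 4*δ * (F^[n] x).im := mul_le_mul_of_nonneg_right h2 haim0
      _ ≤ 4*δ * (2 * Complex.abs (F^[n] w₀)) := by
          apply mul_le_mul_of_nonneg_left (haim.trans habs_a) (by linarith)
      _ = 8*δ * Complex.abs (F^[n] w₀) := by ring
      _ ≤ ε/2 * Complex.abs (F^[n] w₀) := by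
          apply mul_le_mul_of_nonneg_right (by linarith) habsζ.le
  have hterm2 : Complex.abs (F^[n] x / F^[n] w₀ - 1) < ε/4 :=
    lt_of_lt_of_le hn (min_le_left _ _)
  have hfinal : Complex.abs (F^[n] y / F^[n] w₀ - 1) < ε := by
    calc Complex.abs (F^[n] y / F^[n] w₀ - 1)
        = Complex.abs ((F^[n] y - F^[n] x) / F^[n] w₀ + (F^[n] x / F^[n] w₀ - 1)) := by
          rw [← hdecomp]
      _ ≤ Complex.abs ((F^[n] y - F^[n] x) / F^[n] w₀)
          + Complex.abs (F^[n] x / F^[n] w₀ - 1) := Complex.abs.add_le _ _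
      _ < ε/2 + ε/4 := by
          apply add_lt_add_of_le_of_lt hterm1 hterm2
      _ < ε := by linarith
  show dist ((fun _ : ℂ => (1:ℂ)) y) (F^[n] y / F^[n] w₀) < ε
  rw [dist_comm, Complex.dist_eq]
  exact hfinal
end

section
/- Let F be a holomorphic self-map of the upper half-plane H⁺, parabolic with Wolff point at ∞ and with positive hyperbolic step. Then either arg F^n → 0 uniformly on compact subsets of H⁺, or arg F^n → π uniformly on compact subsets of H⁺. -/
open Complex Metric Filter Set

noncomputable def rho (z w : ℂ) : ℝ := ‖(w - z) / (w - (starRingEnd ℂ) z)‖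

lemma pdH_eq (z w : ℂ) : pdH z w = artanh (rho z w) := rfl

lemma normSq_identity (z w : ℂ) :
    Complex.normSq (w - (starRingEnd ℂ) z) = Complex.normSq (w - z) + 4 * z.im * w.im := by
  simp [Complex.normSq_apply, Complex.sub_re, Complex.sub_im, Complex.conj_re, Complex.conj_im]
  ring

lemma denom_pos {z w : ℂ} (hz : 0 < z.im) (hw : 0 < w.im) :
    z.im + w.im ≤ ‖w - (starRingEnd ℂ) z‖ := by
  have h := Complex.abs_im_le_norm (w - (starRingEnd ℂ) z)
  have : (w - (starRingEnd ℂ) z).im = w.im + z.im := by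
    simp [Complex.sub_im, Complex.conj_im]
  rw [this] at h
  rw [abs_of_pos (by linarith)] at h
  linarith

lemma rho_nonneg (z w : ℂ) : 0 ≤ rho z w := norm_nonneg _

lemma rho_num_eq {z w : ℂ} (hz : 0 < z.im) (hw : 0 < w.im) :
    ‖w - z‖ = rho z w * ‖w - (starRingEnd ℂ) z‖ := by
  have hd : ‖w - (starRingEnd ℂ) z‖ ≠ 0 :=
    (lt_of_lt_of_le (by linarith) (denom_pos hz hw)).ne'
  rw [rho, norm_div, div_mul_cancel₀ _ hd]

lemma rho_lt_one {z w : ℂ} (hz : 0 < z.im) (hw : 0 < w.im) : rho z w < 1 := by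
  have hd : 0 < ‖w - (starRingEnd ℂ) z‖ := by
    have := denom_pos hz hw; linarith
  rw [rho, norm_div, div_lt_one hd]
  have h1 : ‖w - z‖ ^ 2 = Complex.normSq (w - z) := Complex.sq_norm _
  have h2 : ‖w - (starRingEnd ℂ) z‖ ^ 2 = Complex.normSq (w - (starRingEnd ℂ) z) :=
    Complex.sq_norm _
  have h3 := normSq_identity z w
  nlinarith [norm_nonneg (w - z), norm_nonneg (w - (starRingEnd ℂ) z),
    mul_pos hz hw]

lemma rho_comm (z w : ℂ) : rho z w = rho w z := by
  unfold rho
  rw [norm_div, norm_div, norm_sub_rev]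
  congr 1
  rw [← Complex.norm_conj (w - (starRingEnd ℂ) z)]
  have : (starRingEnd ℂ) (w - (starRingEnd ℂ) z) = (starRingEnd ℂ) w - z := by
    simp [map_sub]
  rw [this, norm_sub_rev]

noncomputable def cay (z0 ζ : ℂ) : ℂ := (ζ - z0) / (ζ - (starRingEnd ℂ) z0)

noncomputable def cayInv (z0 u : ℂ) : ℂ := ((starRingEnd ℂ) z0 * u - z0) / (u - 1)

lemma rho_eq_abs_cay (z w : ℂ) : rho z w = ‖cay z w‖ := rfl

lemma denom_ne {z0 ζ : ℂ} (hz0 : 0 < z0.im) (hζ : 0 < ζ.im) :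
    ζ - (starRingEnd ℂ) z0 ≠ 0 := by
  intro h
  have : (ζ - (starRingEnd ℂ) z0).im = ζ.im + z0.im := by
    simp [Complex.sub_im, Complex.conj_im]
  rw [h] at this
  simp at this
  linarith

lemma cay_mapsTo {z0 : ℂ} (hz0 : 0 < z0.im) :
    MapsTo (cay z0) UHP (ball (0:ℂ) 1) := by
  intro ζ hζ
  rw [mem_ball_zero_iff]
  exact rho_lt_one hz0 hζ

lemma cayInv_mapsTo {z0 : ℂ} (hz0 : 0 < z0.im) :
    MapsTo (cayInv z0) (ball (0:ℂ) 1) UHP := by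
  intro u hu
  rw [mem_ball_zero_iff] at hu
  have hns : Complex.normSq u < 1 := by
    have : Complex.normSq u = ‖u‖ ^ 2 := (Complex.sq_norm u).symm
    nlinarith [norm_nonneg u]
  have hune : u - 1 ≠ 0 := by
    intro h
    have : u = 1 := by linear_combination h
    rw [this] at hu; norm_num at hu
  show 0 < (cayInv z0 u).im
  rw [cayInv, Complex.div_im]
  have hq : 0 < Complex.normSq (u - 1) := Complex.normSq_pos.2 hune
  have key : ((starRingEnd ℂ) z0 * u - z0).im * (u - 1).re -
      ((starRingEnd ℂ) z0 * u - z0).re * (u - 1).im = z0.im * (1 - Complex.normSq u) := by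
    simp [Complex.mul_im, Complex.mul_re, Complex.sub_im, Complex.sub_re,
      Complex.conj_re, Complex.conj_im, Complex.normSq_apply]
    ring
  have : ((starRingEnd ℂ) z0 * u - z0).im * (u - 1).re / Complex.normSq (u - 1) -
      ((starRingEnd ℂ) z0 * u - z0).re * (u - 1).im / Complex.normSq (u - 1)
      = z0.im * (1 - Complex.normSq u) / Complex.normSq (u - 1) := by
    rw [div_sub_div_same, key]
  rw [this]
  exact div_pos (mul_pos hz0 (by linarith)) hq

lemma cay_left_inv {z0 ζ : ℂ} (hz0 : 0 < z0.im) (hζ : 0 < ζ.im) :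
    cayInv z0 (cay z0 ζ) = ζ := by
  have hd : ζ - (starRingEnd ℂ) z0 ≠ 0 := denom_ne hz0 hζ
  have hconj : (starRingEnd ℂ) z0 - z0 ≠ 0 := by
    intro h
    have : ((starRingEnd ℂ) z0 - z0).im = -2 * z0.im := by
      simp [Complex.sub_im, Complex.conj_im]; ring
    rw [h] at this; simp at this; linarith
  have hne1 : cay z0 ζ - 1 ≠ 0 := by
    rw [cay]
    rw [div_sub_one hd]
    have : ζ - z0 - (ζ - (starRingEnd ℂ) z0) = (starRingEnd ℂ) z0 - z0 := by ring
    rw [this]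
    exact div_ne_zero hconj hd
  rw [cayInv, cay]
  field_simp
  linear_combination ζ * mul_inv_cancel₀ hconj

lemma cay_diff {z0 : ℂ} (hz0 : 0 < z0.im) : DifferentiableOn ℂ (cay z0) UHP := by
  apply DifferentiableOn.div (differentiableOn_id.sub (differentiableOn_const _))
    (differentiableOn_id.sub (differentiableOn_const _))
  exact fun ζ hζ => denom_ne hz0 hζ

lemma cayInv_diff (z0 : ℂ) : DifferentiableOn ℂ (cayInv z0) (ball (0:ℂ) 1) := by
  apply DifferentiableOn.div
  · exact (differentiableOn_const _).mul differentiableOn_id |>.sub (differentiableOn_const _)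
  · exact differentiableOn_id.sub (differentiableOn_const _)
  · intro u hu
    rw [mem_ball_zero_iff] at hu
    intro h
    have : u = 1 := by linear_combination h
    rw [this] at hu; norm_num at hu

lemma cayInv_zero (z0 : ℂ) : cayInv z0 0 = z0 := by
  simp [cayInv]

lemma cay_self (a : ℂ) : cay a a = 0 := by
  simp [cay]

theorem schwarz_pick {F : ℂ → ℂ} (hd : DifferentiableOn ℂ F UHP) (hm : MapsTo F UHP UHP)
    {z w : ℂ} (hz : z ∈ UHP) (hw : w ∈ UHP) : rho (F z) (F w) ≤ rho z w := by
  have hFz : F z ∈ UHP := hm hz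
  set g : ℂ → ℂ := fun u => cay (F z) (F (cayInv z u)) with hg
  have hgm : MapsTo g (ball (0:ℂ) 1) (ball (0:ℂ) 1) :=
    fun u hu => cay_mapsTo hFz (hm (cayInv_mapsTo hz hu))
  have hgd : DifferentiableOn ℂ g (ball (0:ℂ) 1) :=
    ((cay_diff hFz).comp hd hm).comp (cayInv_diff z)
      (cayInv_mapsTo hz)
  have h0 : g 0 = 0 := by
    rw [hg]; simp only [cayInv_zero]; exact cay_self _
  have hlt : ‖cay z w‖ < 1 := rho_lt_one hz hw
  have habs := Complex.norm_le_norm_of_mapsTo_ball hgd (hgm.mono_right ball_subset_closedBall) h0 hlt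
  have hgval : g (cay z w) = cay (F z) (F w) := by
    rw [hg]; simp only [cay_left_inv hz hw]
  rw [hgval] at habs
  exact habs

lemma rho_iterate {F : ℂ → ℂ} (hd : DifferentiableOn ℂ F UHP) (hm : MapsTo F UHP UHP)
    {z w : ℂ} (hz : z ∈ UHP) (hw : w ∈ UHP) (n : ℕ) :
    rho (F^[n] z) (F^[n] w) ≤ rho z w := by
  induction n with
  | zero => simp
  | succ n ih =>
    rw [Function.iterate_succ_apply', Function.iterate_succ_apply']
    exact le_trans (schwarz_pick hd hm (hm.iterate n hz) (hm.iterate n hw)) ih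

lemma abs_pos_of_im {z : ℂ} (hz : 0 < z.im) : 0 < ‖z‖ := by
  apply norm_pos_iff.mpr
  intro h; rw [h] at hz; simp at hz

lemma denom_le {z w : ℂ} (hz : 0 < z.im) :
    ‖w - (starRingEnd ℂ) z‖ ≤ ‖w - z‖ + 2 * z.im := by
  have h : w - (starRingEnd ℂ) z = (w - z) + (z - (starRingEnd ℂ) z) := by ring
  rw [h]
  refine le_trans (norm_add_le _ _) ?_
  rw [Complex.sub_conj]
  have : ‖(2 * z.im : ℝ) * Complex.I‖ = 2 * z.im := by
    rw [norm_mul, Complex.norm_real, Real.norm_eq_abs, Complex.norm_I, mul_one, abs_of_pos (by linarith)]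
  linarith [this.le]

lemma close_of_rho_le {z w : ℂ} (hz : 0 < z.im) (hw : 0 < w.im) {t : ℝ} (ht : t < 1)
    (h : rho z w ≤ t) : ‖w - z‖ ≤ 2 * t / (1 - t) * z.im := by
  have h1 := rho_num_eq hz hw
  have h2 := denom_le (w := w) hz
  have hd : 0 < ‖w - (starRingEnd ℂ) z‖ := lt_of_lt_of_le (by linarith) (denom_pos hz hw)
  have ht0 : 0 ≤ t := le_trans (rho_nonneg z w) h
  have key : ‖w - z‖ ≤ t * (‖w - z‖ + 2 * z.im) := by
    calc ‖w - z‖ = rho z w * ‖w - (starRingEnd ℂ) z‖ := h1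
    _ ≤ t * ‖w - (starRingEnd ℂ) z‖ := by
        apply mul_le_mul_of_nonneg_right h hd.le
    _ ≤ t * (‖w - z‖ + 2 * z.im) := by
        apply mul_le_mul_of_nonneg_left h2 ht0
  rw [div_mul_eq_mul_div, le_div_iff₀ (by linarith : (0:ℝ) < 1 - t)]
  nlinarith
lemma re_lower {z : ℂ} (hz : 0 < z.im) {δ : ℝ} (hδ1 : δ ≤ 1)
    (him : z.im ≤ δ * ‖z‖) : (1 - δ) * ‖z‖ ≤ |z.re| := by
  have h1 : ‖z‖ ^ 2 = z.re ^ 2 + z.im ^ 2 := by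
    rw [Complex.sq_norm, Complex.normSq_apply]; ring
  have h2 : 0 < ‖z‖ := abs_pos_of_im hz
  nlinarith [abs_nonneg z.re, _root_.sq_abs z.re, sq_nonneg (|z.re| - (1 - δ) * ‖z‖)]

lemma rho_ge_of_opposite {z w : ℂ} (hz : 0 < z.im) (hw : 0 < w.im) {η : ℝ}
    (hη : 0 < η) (hη2 : η ≤ 1/2) (hzc : z.im ≤ η * ‖z‖)
    (hwc : w.im ≤ η * ‖w‖)
    (hzr : 0 < z.re) (hwr : w.re < 0) : 1 / (1 + 4 * η) ≤ rho z w := by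
  have hzabs : 0 < ‖z‖ := abs_pos_of_im hz
  have hre : (1 - η) * ‖z‖ ≤ z.re := by
    have := re_lower hz (by linarith) hzc
    rwa [abs_of_pos hzr] at this
  have hA : ‖z‖ / 2 ≤ ‖w - z‖ := by
    have h1 : z.re - w.re ≤ |(w - z).re| := by
      have : (w - z).re = w.re - z.re := by simp [Complex.sub_re]
      rw [this]
      calc z.re - w.re = -(w.re - z.re) := by ring
        _ ≤ |w.re - z.re| := neg_le_abs _
    have h2 := Complex.abs_re_le_norm (w - z)
    nlinarith
  have hD : ‖w - (starRingEnd ℂ) z‖ ≤ ‖w - z‖ + 2 * z.im :=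
    denom_le hz
  have hDpos : 0 < ‖w - (starRingEnd ℂ) z‖ :=
    lt_of_lt_of_le (by linarith) (denom_pos hz hw)
  have hrho : rho z w = ‖w - z‖ / ‖w - (starRingEnd ℂ) z‖ := by
    rw [rho, norm_div]
  rw [hrho, div_le_div_iff₀ (by linarith) hDpos, one_mul]
  have h2im : 2 * z.im ≤ 2 * η * ‖z‖ := by linarith
  have h4 : 2 * η * ‖z‖ ≤ 4 * η * ‖w - z‖ := by nlinarith
  nlinarith [norm_nonneg (w - z)]

lemma tendsto_artanh_zero {r : ℕ → ℝ} (h : Tendsto r atTop (nhds 0)) :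
    Tendsto (fun n => artanh (r n)) atTop (nhds 0) := by
  have h1 : Tendsto (fun n => (1 + r n) / (1 - r n)) atTop (nhds 1) := by
    have := ((tendsto_const_nhds (x := (1:ℝ))).add h).div
      ((tendsto_const_nhds (x := (1:ℝ))).sub h) (by norm_num)
    simpa [Pi.div_def] using this
  have h2 : Tendsto (fun n => Real.log ((1 + r n) / (1 - r n))) atTop (nhds 0) := by
    have := (Real.continuousAt_log (by norm_num : (1:ℝ) ≠ 0)).tendsto.comp h1
    simpa [Real.log_one, Function.comp_def] using this
  have := h2.const_mul (1/2 : ℝ)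
  simpa [artanh] using this

lemma rho_le_of_artanh_le {r C : ℝ} (h0 : 0 ≤ r) (h1 : r < 1) (h : artanh r ≤ C) :
    r ≤ (Real.exp (2 * C) - 1) / (Real.exp (2 * C) + 1) := by
  have hX : (0:ℝ) < (1 + r) / (1 - r) := div_pos (by linarith) (by linarith)
  rw [artanh] at h
  have hlog : Real.log ((1 + r) / (1 - r)) ≤ 2 * C := by linarith
  have hle : (1 + r) / (1 - r) ≤ Real.exp (2 * C) := (Real.log_le_iff_le_exp hX).1 hlog
  rw [div_le_iff₀ (by linarith : (0:ℝ) < 1 - r)] at hle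
  rw [le_div_iff₀ (by positivity : (0:ℝ) < Real.exp (2 * C) + 1)]
  nlinarith

lemma key_bound {z' Z : ℂ} (hz' : 0 < z'.im) (hZ : 0 < Z.im) {t δ : ℝ}
    (ht : t < 1) (ht0 : 0 ≤ t) (hρ : rho z' Z ≤ t) (hδ : 0 < δ)
    (hδc : δ * (1 + 2 * t / (1 - t)) ≤ 1/2) (him : z'.im ≤ δ * ‖z'‖) :
    Z.im / ‖Z‖ ≤ 2 * (1 + 2 * t / (1 - t)) * δ ∧
      (0 < z'.re → 0 < Z.re) ∧ (z'.re < 0 → Z.re < 0) := by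
  set c := 2 * t / (1 - t) with hcdef
  have hc0 : 0 ≤ c := div_nonneg (by linarith) (by linarith)
  have habs : 0 < ‖z'‖ := abs_pos_of_im hz'
  have hδ1 : δ ≤ 1/2 := by nlinarith
  have hclose : ‖Z - z'‖ ≤ c * z'.im := close_of_rho_le hz' hZ ht hρ
  have hclose' : ‖Z - z'‖ ≤ c * δ * ‖z'‖ := by nlinarith
  have hZim : Z.im ≤ (1 + c) * δ * ‖z'‖ := by
    have h1 : Z.im - z'.im ≤ |(Z - z').im| := by
      have : (Z - z').im = Z.im - z'.im := by simp [Complex.sub_im]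
      rw [this]; exact le_abs_self _
    have h2 := Complex.abs_im_le_norm (Z - z')
    nlinarith
  have hre := re_lower hz' (by linarith) him
  have hrediff : |Z.re - z'.re| ≤ c * δ * ‖z'‖ := by
    have : (Z - z').re = Z.re - z'.re := by simp [Complex.sub_re]
    have h2 := Complex.abs_re_le_norm (Z - z')
    rw [this] at h2
    linarith
  have hrene : z'.re ≠ 0 := by
    intro h
    rw [h] at hre; simp at hre
    nlinarith
  have hZre_abs : ‖z'‖ / 2 ≤ |Z.re| ∧ (0 < z'.re → 0 < Z.re) ∧ (z'.re < 0 → Z.re < 0) := by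
    rcases hrene.lt_or_gt with hneg | hpos
    · have h1 : Z.re ≤ z'.re + c * δ * ‖z'‖ := by
        have := abs_le.1 hrediff; linarith [this.2]
      have h2 : z'.re ≤ -((1 - δ) * ‖z'‖) := by
        rw [abs_of_neg hneg] at hre; linarith
      have h3 : Z.re ≤ -(‖z'‖ / 2) := by nlinarith
      constructor
      · rw [abs_of_neg (by nlinarith)]; linarith
      · exact ⟨fun h => absurd h (by linarith), fun _ => by nlinarith⟩
    · have h1 : z'.re - c * δ * ‖z'‖ ≤ Z.re := by
        have := abs_le.1 hrediff; linarith [this.1]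
      have h2 : (1 - δ) * ‖z'‖ ≤ z'.re := by
        rwa [abs_of_pos hpos] at hre
      have h3 : ‖z'‖ / 2 ≤ Z.re := by nlinarith
      constructor
      · rw [abs_of_pos (by nlinarith)]; linarith
      · exact ⟨fun _ => by nlinarith, fun h => absurd h (by linarith)⟩
  obtain ⟨hZre, hsigns⟩ := hZre_abs
  refine ⟨?_, hsigns⟩
  have hZabs : ‖z'‖ / 2 ≤ ‖Z‖ :=
    le_trans hZre (Complex.abs_re_le_norm Z)
  have hZabspos : 0 < ‖Z‖ := abs_pos_of_im hZ
  rw [div_le_iff₀ hZabspos]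
  nlinarith

theorem stmt18 (F : ℂ → ℂ) (hF : ParabolicAtInf F)
    (hstep : ∀ w ∈ UHP, ∃ s > 0,
      Tendsto (fun n => pdH (F^[n] w) (F^[n+1] w)) atTop (nhds s)) :
    TendstoLocallyUniformlyOn (fun n w => (F^[n] w).arg) (fun _ => 0) atTop UHP ∨
    TendstoLocallyUniformlyOn (fun n w => (F^[n] w).arg) (fun _ => Real.pi) atTop UHP := by
  obtain ⟨⟨hdF, hmF⟩, -, hinf, hwolff⟩ := hF
  have hI : Complex.I ∈ UHP := by simp [UHP]
  obtain ⟨s, hs, hpd⟩ := hstep Complex.I hI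
  have hzU : ∀ n : ℕ, F^[n] Complex.I ∈ UHP := fun n => hmF.iterate n hI
  have hzim : ∀ n : ℕ, 0 < (F^[n] Complex.I).im := fun n => hzU n
  -- |F^[n] I| → ∞
  have habs : Tendsto (fun n => ‖F^[n] Complex.I‖) atTop atTop := by
    rw [Filter.tendsto_atTop]
    intro M
    have h := hinf {Complex.I}
      (fun x hx => by rw [mem_singleton_iff] at hx; rw [hx]; exact hI)
      isCompact_singleton M
    exact h.mono fun n hn => hn Complex.I rfl
  -- Claim A : the orbit goes tangentially to ∞
  have hsin : ∀ δ : ℝ, 0 < δ →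
      ∀ᶠ n in atTop, (F^[n] Complex.I).im < δ * ‖F^[n] Complex.I‖ := by
    intro δ hδ
    by_contra hcon
    rw [Filter.not_eventually] at hcon
    have hcon' : ∃ᶠ n in atTop,
        δ * ‖F^[n] Complex.I‖ ≤ (F^[n] Complex.I).im :=
      hcon.mono fun n h => not_lt.1 h
    obtain ⟨φ, hφmono, hφ⟩ := Filter.extraction_of_frequently_atTop hcon'
    have hwU : ∀ k, F^[φ k] Complex.I ∈ UHP := fun k => hzU (φ k)
    have hwnt : NonTangToInf (fun k => F^[φ k] Complex.I) :=
      ⟨habs.comp hφmono.tendsto_atTop, δ, hδ, hφ⟩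
    have hlim := hwolff _ hwU hwnt
    -- the pseudo-hyperbolic step along the subsequence goes to 0
    have hub : ∀ k, rho (F^[φ k] Complex.I) (F (F^[φ k] Complex.I)) ≤
        ‖F (F^[φ k] Complex.I) / F^[φ k] Complex.I - 1‖ / δ := by
      intro k
      set a := F^[φ k] Complex.I with hadef
      have ha : 0 < a.im := hzim (φ k)
      have hb : 0 < (F a).im := hmF (hwU k)
      have hane : a ≠ 0 := by intro h; rw [h] at ha; simp at ha
      have hnum : ‖F a - a‖ = ‖a‖ * ‖F a / a - 1‖ := by
        rw [← norm_mul]; congr 1; field_simp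
      have hD : δ * ‖a‖ ≤ ‖F a - (starRingEnd ℂ) a‖ := by
        have h1 := denom_pos ha hb
        have h2 := hφ k
        rw [← hadef] at h2
        linarith
      have hDpos : 0 < ‖F a - (starRingEnd ℂ) a‖ :=
        lt_of_lt_of_le (by linarith) (denom_pos ha hb)
      rw [rho, norm_div, hnum, div_le_div_iff₀ hDpos hδ]
      have habsa : 0 ≤ ‖a‖ := norm_nonneg a
      have hm : 0 ≤ ‖F a / a - 1‖ := norm_nonneg _
      nlinarith
    have hrho0 : Tendsto
        (fun k => rho (F^[φ k] Complex.I) (F (F^[φ k] Complex.I))) atTop (nhds 0) := by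
      apply squeeze_zero (fun k => rho_nonneg _ _) hub
      have h1 : Tendsto (fun k => F (F^[φ k] Complex.I) / F^[φ k] Complex.I - 1)
          atTop (nhds 0) := by
        simpa using hlim.sub (tendsto_const_nhds (x := (1:ℂ)))
      have h2 : Tendsto (fun k => ‖F (F^[φ k] Complex.I) / F^[φ k] Complex.I - 1‖)
          atTop (nhds 0) := by
        have := (continuous_norm.tendsto 0).comp h1
        simpa [Function.comp_def] using this
      simpa using h2.div_const δ
    have hpd0 : Tendsto (fun k => pdH (F^[φ k] Complex.I) (F^[φ k + 1] Complex.I))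
        atTop (nhds 0) := by
      have heq : (fun k => pdH (F^[φ k] Complex.I) (F^[φ k + 1] Complex.I)) =
          fun k => artanh (rho (F^[φ k] Complex.I) (F (F^[φ k] Complex.I))) := by
        funext k
        rw [pdH_eq, Function.iterate_succ_apply']
      rw [heq]
      exact tendsto_artanh_zero hrho0
    have hpds : Tendsto (fun k => pdH (F^[φ k] Complex.I) (F^[φ k + 1] Complex.I))
        atTop (nhds s) := by
      have := hpd.comp hφmono.tendsto_atTop
      simpa [Function.comp_def] using this
    exact absurd (tendsto_nhds_unique hpd0 hpds) (by linarith)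
  -- eventually the pseudo-hyperbolic step is ≤ t1 < 1
  set C := s + 1 with hCdef
  have hE : 1 < Real.exp (2 * C) := by
    rw [Real.one_lt_exp_iff]; linarith
  set t1 := (Real.exp (2 * C) - 1) / (Real.exp (2 * C) + 1) with ht1def
  have ht1pos : 0 < t1 := div_pos (by linarith) (by linarith)
  have ht1lt : t1 < 1 := (div_lt_one (by linarith)).2 (by linarith)
  have hstep_le : ∀ᶠ n in atTop,
      rho (F^[n] Complex.I) (F^[n+1] Complex.I) ≤ t1 := by
    have hev : ∀ᶠ n in atTop, pdH (F^[n] Complex.I) (F^[n+1] Complex.I) ≤ C :=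
      hpd.eventually (eventually_le_nhds (by linarith))
    refine hev.mono fun n h => ?_
    exact rho_le_of_artanh_le (rho_nonneg _ _) (rho_lt_one (hzim n) (hzim (n+1))) h
  -- choice of the cone aperture η0
  set η0 := min (1/2 : ℝ) ((1 - t1) / (8 * t1)) with hη0def
  have hη0pos : 0 < η0 := lt_min (by norm_num) (div_pos (by linarith) (by linarith))
  have hη0le : η0 ≤ 1/2 := min_le_left _ _
  have hη0t1 : t1 < 1 / (1 + 4 * η0) := by
    rw [lt_div_iff₀ (by linarith)]
    have h8 := min_le_right (1/2 : ℝ) ((1 - t1) / (8 * t1))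
    rw [← hη0def] at h8
    have : 4 * t1 * η0 ≤ 4 * t1 * ((1 - t1) / (8 * t1)) :=
      mul_le_mul_of_nonneg_left h8 (by linarith)
    have heq : 4 * t1 * ((1 - t1) / (8 * t1)) = (1 - t1) / 2 := by
      field_simp; ring
    nlinarith
  -- the sign of the real part stabilizes
  obtain ⟨N, hN⟩ := eventually_atTop.1 ((hsin η0 hη0pos).and hstep_le)
  have hre_ne : ∀ n, N ≤ n → (F^[n] Complex.I).re ≠ 0 := by
    intro n hn h0
    obtain ⟨h1, -⟩ := hN n hn
    have habs2 : ‖F^[n] Complex.I‖ = (F^[n] Complex.I).im := by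
      have hsq : ‖F^[n] Complex.I‖ ^ 2 = (F^[n] Complex.I).im ^ 2 := by
        rw [Complex.sq_norm, Complex.normSq_apply, h0]; ring
      nlinarith [abs_pos_of_im (hzim n), hzim n]
    rw [habs2] at h1
    nlinarith [hzim n]
  have hflip : ∀ n, N ≤ n →
      (0 < (F^[n] Complex.I).re → 0 < (F^[n+1] Complex.I).re) ∧
      ((F^[n] Complex.I).re < 0 → (F^[n+1] Complex.I).re < 0) := by
    intro n hn
    obtain ⟨h1, h2⟩ := hN n hn
    obtain ⟨h1', -⟩ := hN (n+1) (by omega)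
    constructor
    · intro hp
      rcases (hre_ne (n+1) (by omega)).lt_or_gt with hneg | hpos
      · exfalso
        have := rho_ge_of_opposite (hzim n) (hzim (n+1)) hη0pos hη0le
          h1.le h1'.le hp hneg
        linarith
      · exact hpos
    · intro hneg
      rcases (hre_ne (n+1) (by omega)).lt_or_gt with hneg' | hpos'
      · exact hneg'
      · exfalso
        have := rho_ge_of_opposite (hzim (n+1)) (hzim n) hη0pos hη0le
          h1'.le h1.le hpos' hneg
        rw [← rho_comm] at this
        linarith
  have hdich : (∀ n, N ≤ n → 0 < (F^[n] Complex.I).re) ∨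
      (∀ n, N ≤ n → (F^[n] Complex.I).re < 0) := by
    rcases (hre_ne N le_rfl).lt_or_gt with h | h
    · right
      intro n hn
      induction n, hn using Nat.le_induction with
      | base => exact h
      | succ n hn ih => exact (hflip n hn).2 ih
    · left
      intro n hn
      induction n, hn using Nat.le_induction with
      | base => exact h
      | succ n hn ih => exact (hflip n hn).1 ih
  have hUopen : IsOpen UHP := isOpen_lt continuous_const Complex.continuous_im
  have hπ := Real.pi_pos
  rcases hdich with hplus | hminus
  · left
    rw [tendstoLocallyUniformlyOn_iff_forall_isCompact hUopen]
    intro K hKU hKc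
    rw [Metric.tendstoUniformlyOn_iff]
    intro ε hε
    rcases K.eq_empty_or_nonempty with rfl | hne
    · exact Filter.Eventually.of_forall fun n x hx => absurd hx (notMem_empty x)
    have hcont : ContinuousOn (fun w => rho Complex.I w) K := by
      apply continuous_norm.comp_continuousOn
      apply ContinuousOn.div
      · exact (continuous_id.sub continuous_const).continuousOn
      · exact (continuous_id.sub continuous_const).continuousOn
      · exact fun x hx => denom_ne (by simp) (hKU hx)
    obtain ⟨wm, hwmK, hwmax⟩ := hKc.exists_isMaxOn hne hcont
    set t := rho Complex.I wm with htdef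
    have ht1 : t < 1 := rho_lt_one (by simp) (hKU hwmK)
    have ht0 : 0 ≤ t := rho_nonneg _ _
    set c := 2 * t / (1 - t) with hcdef
    have hc0 : 0 ≤ c := div_nonneg (by linarith) (by linarith)
    have h1c : (0:ℝ) < 1 + c := by linarith
    set δ := min (1 / (2 * (1 + c))) (ε / (2 * Real.pi * (1 + c))) with hδdef
    have hδpos : 0 < δ := lt_min (by positivity) (by positivity)
    have hδ1 : δ * (1 + c) ≤ 1/2 := by
      have h := min_le_left (1 / (2 * (1 + c))) (ε / (2 * Real.pi * (1 + c)))
      rw [← hδdef] at h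
      rw [le_div_iff₀ (by positivity)] at h
      linarith
    have hδ2 : 2 * (1 + c) * δ ≤ ε / Real.pi := by
      have h := min_le_right (1 / (2 * (1 + c))) (ε / (2 * Real.pi * (1 + c)))
      rw [← hδdef] at h
      rw [le_div_iff₀ (by positivity)] at h
      rw [le_div_iff₀ hπ]
      linarith
    have hsign : ∀ᶠ n in atTop, 0 < (F^[n] Complex.I).re := eventually_atTop.2 ⟨N, hplus⟩
    filter_upwards [hsin δ hδpos, hsign] with n hcone hre
    intro w hwK
    have hwU := hKU hwK
    have hZU : F^[n] w ∈ UHP := hmF.iterate n hwU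
    have hρ : rho (F^[n] Complex.I) (F^[n] w) ≤ t :=
      le_trans (rho_iterate hdF hmF hI hwU n) (hwmax hwK)
    obtain ⟨hratio, hsgn, -⟩ := key_bound (hzim n) hZU ht1 ht0 hρ hδpos hδ1 hcone.le
    have hre0 : 0 < (F^[n] w).re := hsgn hre
    have hZim : 0 < (F^[n] w).im := hZU
    have hZne : F^[n] w ≠ 0 := by intro h; rw [h] at hZim; simp at hZim
    have habsZ : 0 < ‖F^[n] w‖ := abs_pos_of_im hZim
    set θ := (F^[n] w).arg with hθdef
    have hsinθ : Real.sin θ = (F^[n] w).im / ‖F^[n] w‖ := Complex.sin_arg _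
    have hcosθ : Real.cos θ = (F^[n] w).re / ‖F^[n] w‖ := Complex.cos_arg hZne
    have hsinpos : 0 < Real.sin θ := by rw [hsinθ]; exact div_pos hZim habsZ
    have hcospos : 0 < Real.cos θ := by rw [hcosθ]; exact div_pos hre0 habsZ
    have hθpos : 0 < θ := by
      by_contra h
      push_neg at h
      have := Real.sin_nonpos_of_nonpos_of_neg_pi_le h (Complex.neg_pi_lt_arg _).le
      linarith
    have hθlt : θ < Real.pi / 2 := by
      by_contra h
      push_neg at h
      have := Real.cos_nonpos_of_pi_div_two_le_of_le h
        (le_trans (Complex.arg_le_pi _) (by linarith))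
      linarith
    have hJ := Real.mul_le_sin hθpos.le hθlt.le
    have hsinsmall : Real.sin θ ≤ ε / Real.pi := by
      rw [hsinθ]; exact le_trans hratio hδ2
    have hθε : θ < ε := by
      have h1 : 2 / Real.pi * θ ≤ ε / Real.pi := le_trans hJ hsinsmall
      rw [div_mul_eq_mul_div] at h1
      have h2 : 2 * θ ≤ ε := (div_le_div_iff_of_pos_right hπ).1 h1
      linarith
    show dist ((0:ℝ)) θ < ε
    rw [Real.dist_eq, zero_sub, abs_neg, abs_of_pos hθpos]
    exact hθε
  · right
    rw [tendstoLocallyUniformlyOn_iff_forall_isCompact hUopen]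
    intro K hKU hKc
    rw [Metric.tendstoUniformlyOn_iff]
    intro ε hε
    rcases K.eq_empty_or_nonempty with rfl | hne
    · exact Filter.Eventually.of_forall fun n x hx => absurd hx (notMem_empty x)
    have hcont : ContinuousOn (fun w => rho Complex.I w) K := by
      apply continuous_norm.comp_continuousOn
      apply ContinuousOn.div
      · exact (continuous_id.sub continuous_const).continuousOn
      · exact (continuous_id.sub continuous_const).continuousOn
      · exact fun x hx => denom_ne (by simp) (hKU hx)
    obtain ⟨wm, hwmK, hwmax⟩ := hKc.exists_isMaxOn hne hcont
    set t := rho Complex.I wm with htdef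
    have ht1 : t < 1 := rho_lt_one (by simp) (hKU hwmK)
    have ht0 : 0 ≤ t := rho_nonneg _ _
    set c := 2 * t / (1 - t) with hcdef
    have hc0 : 0 ≤ c := div_nonneg (by linarith) (by linarith)
    have h1c : (0:ℝ) < 1 + c := by linarith
    set δ := min (1 / (2 * (1 + c))) (ε / (2 * Real.pi * (1 + c))) with hδdef
    have hδpos : 0 < δ := lt_min (by positivity) (by positivity)
    have hδ1 : δ * (1 + c) ≤ 1/2 := by
      have h := min_le_left (1 / (2 * (1 + c))) (ε / (2 * Real.pi * (1 + c)))
      rw [← hδdef] at h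
      rw [le_div_iff₀ (by positivity)] at h
      linarith
    have hδ2 : 2 * (1 + c) * δ ≤ ε / Real.pi := by
      have h := min_le_right (1 / (2 * (1 + c))) (ε / (2 * Real.pi * (1 + c)))
      rw [← hδdef] at h
      rw [le_div_iff₀ (by positivity)] at h
      rw [le_div_iff₀ hπ]
      linarith
    have hsign : ∀ᶠ n in atTop, (F^[n] Complex.I).re < 0 := eventually_atTop.2 ⟨N, hminus⟩
    filter_upwards [hsin δ hδpos, hsign] with n hcone hre
    intro w hwK
    have hwU := hKU hwK
    have hZU : F^[n] w ∈ UHP := hmF.iterate n hwU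
    have hρ : rho (F^[n] Complex.I) (F^[n] w) ≤ t :=
      le_trans (rho_iterate hdF hmF hI hwU n) (hwmax hwK)
    obtain ⟨hratio, -, hsgn⟩ := key_bound (hzim n) hZU ht1 ht0 hρ hδpos hδ1 hcone.le
    have hre0 : (F^[n] w).re < 0 := hsgn hre
    have hZim : 0 < (F^[n] w).im := hZU
    have hZne : F^[n] w ≠ 0 := by intro h; rw [h] at hZim; simp at hZim
    have habsZ : 0 < ‖F^[n] w‖ := abs_pos_of_im hZim
    set θ := (F^[n] w).arg with hθdef
    have hsinθ : Real.sin θ = (F^[n] w).im / ‖F^[n] w‖ := Complex.sin_arg _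
    have hcosθ : Real.cos θ = (F^[n] w).re / ‖F^[n] w‖ := Complex.cos_arg hZne
    have hsinpos : 0 < Real.sin θ := by rw [hsinθ]; exact div_pos hZim habsZ
    have hcosneg : Real.cos θ < 0 := by
      rw [hcosθ]; exact div_neg_of_neg_of_pos hre0 habsZ
    have hθpos : 0 < θ := by
      by_contra h
      push_neg at h
      have := Real.sin_nonpos_of_nonpos_of_neg_pi_le h (Complex.neg_pi_lt_arg _).le
      linarith
    have hθgt : Real.pi / 2 < θ := by
      by_contra h
      push_neg at h
      have := Real.cos_nonneg_of_mem_Icc ⟨by linarith, h⟩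
      linarith
    have hθle : θ ≤ Real.pi := Complex.arg_le_pi _
    have hJ := Real.mul_le_sin (x := Real.pi - θ) (by linarith) (by linarith)
    rw [Real.sin_pi_sub] at hJ
    have hsinsmall : Real.sin θ ≤ ε / Real.pi := by
      rw [hsinθ]; exact le_trans hratio hδ2
    have hθε : Real.pi - θ < ε := by
      have h1 : 2 / Real.pi * (Real.pi - θ) ≤ ε / Real.pi := le_trans hJ hsinsmall
      rw [div_mul_eq_mul_div] at h1
      have h2 : 2 * (Real.pi - θ) ≤ ε := (div_le_div_iff_of_pos_right hπ).1 h1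
      linarith
    show dist Real.pi θ < ε
    rw [Real.dist_eq, _root_.abs_of_nonneg (by linarith)]
    exact hθε
end
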